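/- Let X ∈ ℝ^{d_in×n}, σ: ℝ → ℝ applied entrywise, u ∈ ℝ^{d_in}, and suppose vᵀ := σ(uᵀX) is nonzero and vᵀ ∉ row(X). Let Y ∈ ℝ^{d_out×n} be a nonzero matrix each of whose rows lies in span{vᵀ}. Then for every r ≥ 1, E_σ(r) = 0 < E_id(r). -/

import Mathlib

open scoped BigOperators

namespace CoLA

noncomputable section

/-- Frobenius norm of a real matrix. -/
def frobNorm {m n : ℕ} (M : Matrix (Fin m) (Fin n) ℝ) : ℝ :=
  Real.sqrt (∑ i, ∑ j, (M i j) ^ 2)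

/-- Entrywise application of `σ` to a matrix. -/
def entrywise (σ : ℝ → ℝ) {m n : ℕ} (M : Matrix (Fin m) (Fin n) ℝ) :
    Matrix (Fin m) (Fin n) ℝ :=
  Matrix.of fun i j => σ (M i j)

/-- `E_σ(r)`. -/
def Esig (σ : ℝ → ℝ) {din dout n : ℕ} (X : Matrix (Fin din) (Fin n) ℝ)
    (Y : Matrix (Fin dout) (Fin n) ℝ) (r : ℕ) : ℝ :=
  ⨅ (A : Matrix (Fin r) (Fin din) ℝ), ⨅ (B : Matrix (Fin dout) (Fin r) ℝ),
    frobNorm (Y - B * entrywise σ (A * X))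

/-- `E_id(r)`. -/
def Eid {din dout n : ℕ} (X : Matrix (Fin din) (Fin n) ℝ)
    (Y : Matrix (Fin dout) (Fin n) ℝ) (r : ℕ) : ℝ :=
  ⨅ (A : Matrix (Fin r) (Fin din) ℝ), ⨅ (B : Matrix (Fin dout) (Fin r) ℝ),
    frobNorm (Y - B * A * X)

/-- The (unsorted) singular values of `M`: square roots of eigenvalues of `Mᴴ * M`. -/
def svAux {m n : ℕ} (M : Matrix (Fin m) (Fin n) ℝ) : Fin n → ℝ :=
  fun i => Real.sqrt ((show (Matrix.transpose M * M).IsHermitian by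
    simpa using Matrix.isHermitian_conjTranspose_mul_self M).eigenvalues i)

/-- Singular values of `M` sorted in non-increasing order (0-indexed). -/
def sv {m n : ℕ} (M : Matrix (Fin m) (Fin n) ℝ) : Fin n → ℝ :=
  fun i => svAux M (Tuple.sort (fun j => -(svAux M j)) i)

/-- `k`-th largest singular value (1-indexed, `0` for `k > n`). -/
def sVal {m n : ℕ} (M : Matrix (Fin m) (Fin n) ℝ) (k : ℕ) : ℝ :=
  if h : k - 1 < n then sv M ⟨k - 1, h⟩ else 0

/-- `s_{>k}(M) = √(∑_{j>k} s_j(M)²)` (with `j` 1-indexed). -/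
def sGt {m n : ℕ} (M : Matrix (Fin m) (Fin n) ℝ) (k : ℕ) : ℝ :=
  Real.sqrt (∑ j : Fin n, if k ≤ (j : ℕ) then (sv M j) ^ 2 else 0)

/-- Spectral (ℓ²-operator) norm of a real matrix. -/
def specNorm {m n : ℕ} (M : Matrix (Fin m) (Fin n) ℝ) : ℝ :=
  ‖LinearMap.toContinuousLinearMap (Matrix.toEuclideanLin M)‖

/-- Effective rank `r_α(M)`: the least `k` with `∑_{i≤k} s_i² ≥ α ∑_i s_i²`. -/
def effRank {m n : ℕ} (M : Matrix (Fin m) (Fin n) ℝ) (α : ℝ) : ℕ :=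
  sInf {k : ℕ |
    α * ∑ i : Fin n, (sv M i) ^ 2 ≤ ∑ i : Fin n, if (i : ℕ) < k then (sv M i) ^ 2 else 0}

/-- Row space of `X` inside `Fin n → ℝ`. -/
def rowSpace {d n : ℕ} (X : Matrix (Fin d) (Fin n) ℝ) : Submodule ℝ (Fin n → ℝ) :=
  Submodule.span ℝ (Set.range X)

/-- Row space of `X` as a submodule of Euclidean space. -/
def rowSpaceE {d n : ℕ} (X : Matrix (Fin d) (Fin n) ℝ) :
    Submodule ℝ (EuclideanSpace ℝ (Fin n)) :=
  Submodule.span ℝ (Set.range fun i => (WithLp.equiv 2 (Fin n → ℝ)).symm (X i))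

/-- Row-wise orthogonal projection of the rows of `Y` onto the subspace `S`. -/
def projRows {dout n : ℕ} (S : Submodule ℝ (EuclideanSpace ℝ (Fin n)))
    (Y : Matrix (Fin dout) (Fin n) ℝ) : Matrix (Fin dout) (Fin n) ℝ :=
  Matrix.of fun i => WithLp.equiv 2 (Fin n → ℝ)
    ((Submodule.orthogonalProjectionOnto S ((WithLp.equiv 2 (Fin n → ℝ)).symm (Y i)) :
      EuclideanSpace ℝ (Fin n)))

/-- Row-wise orthogonal projection onto the orthogonal complement of `span{v}`. -/
def projVperp {dout n : ℕ} (v : Fin n → ℝ) (Y : Matrix (Fin dout) (Fin n) ℝ) :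
    Matrix (Fin dout) (Fin n) ℝ :=
  projRows (Submodule.span ℝ {(WithLp.equiv 2 (Fin n → ℝ)).symm v})ᗮ Y

/-- extreme case of Theorem 1: if `vᵀ := σ(uᵀX)` is nonzero with
`vᵀ ∉ row(X)`, and `Y ≠ 0` has all rows in `span{vᵀ}`, then `E_σ(r) = 0 < E_id(r)`
for every `r ≥ 1`. -/
theorem stmt13 {din dout n : ℕ} (X : Matrix (Fin din) (Fin n) ℝ)
    (σ : ℝ → ℝ) (u : Fin din → ℝ) (v : Fin n → ℝ)
    (hv : v = fun j => σ (Matrix.vecMul u X j)) (hvne : v ≠ 0)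
    (hvrow : v ∉ rowSpace X)
    (Y : Matrix (Fin dout) (Fin n) ℝ) (hYne : Y ≠ 0)
    (hrows : ∀ i, Y i ∈ Submodule.span ℝ {v}) :
    ∀ r : ℕ, 1 ≤ r → Esig σ X Y r = 0 ∧ 0 < Eid X Y r := by
  intro r hr
  have hr0 : 0 < r := hr
  -- coefficients for rows of Y
  have hc : ∀ i, ∃ c : ℝ, c • v = Y i := fun i =>
    Submodule.mem_span_singleton.mp (hrows i)
  choose c hcspec using hc
  constructor
  · -- Esig = 0
    set A₀ : Matrix (Fin r) (Fin din) ℝ := Matrix.of fun _ i => u i with hA₀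
    set M₀ := entrywise σ (A₀ * X) with hM₀
    have hM₀v : ∀ k j, M₀ k j = v j := by
      intro k j
      simp only [hM₀, entrywise, Matrix.of_apply, Matrix.mul_apply, hA₀, hv]
      rfl
    set k0 : Fin r := ⟨0, hr0⟩ with hk0
    set B₀ : Matrix (Fin dout) (Fin r) ℝ := Matrix.of fun i k => if k = k0 then c i else 0
      with hB₀
    have hzero : Y - B₀ * M₀ = 0 := by
      ext i j
      simp only [Matrix.sub_apply, Matrix.mul_apply, hB₀, Matrix.of_apply, hM₀v,
        ite_mul, zero_mul, Finset.sum_ite_eq', Finset.mem_univ, if_true, Matrix.zero_apply]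
      rw [← hcspec i]
      simp [sub_eq_zero, mul_comm]
    have hfrob0 : frobNorm (Y - B₀ * M₀) = 0 := by
      rw [hzero]
      simp [frobNorm]
    have hnn : ∀ (A : Matrix (Fin r) (Fin din) ℝ) (B : Matrix (Fin dout) (Fin r) ℝ),
        0 ≤ frobNorm (Y - B * entrywise σ (A * X)) := fun A B => Real.sqrt_nonneg _
    have hge : 0 ≤ Esig σ X Y r :=
      Real.iInf_nonneg fun A => Real.iInf_nonneg fun B => hnn A B
    have hle : Esig σ X Y r ≤ 0 := by
      have h1 : Esig σ X Y r ≤ ⨅ B : Matrix (Fin dout) (Fin r) ℝ,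
          frobNorm (Y - B * entrywise σ (A₀ * X)) := by
        apply ciInf_le
        refine ⟨0, ?_⟩
        rintro x ⟨A, rfl⟩
        exact Real.iInf_nonneg fun B => hnn A B
      have h2 : (⨅ B : Matrix (Fin dout) (Fin r) ℝ,
          frobNorm (Y - B * entrywise σ (A₀ * X))) ≤ frobNorm (Y - B₀ * M₀) := by
        apply ciInf_le
        refine ⟨0, ?_⟩
        rintro x ⟨B, rfl⟩
        exact hnn A₀ B
      calc Esig σ X Y r ≤ _ := h1
        _ ≤ frobNorm (Y - B₀ * M₀) := h2
        _ = 0 := hfrob0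
    linarith
  · -- 0 < Eid
    -- find a nonzero row
    have : ∃ i j, Y i j ≠ 0 := by
      by_contra h
      push_neg at h
      exact hYne (by ext i j; exact h i j)
    obtain ⟨i0, j0, hij⟩ := this
    have hYi0 : Y i0 ∉ rowSpace X := by
      intro hmem
      have hc0 : c i0 ≠ 0 := by
        intro h0
        rw [← hcspec i0, h0, zero_smul] at hij
        exact hij rfl
      have : v ∈ rowSpace X := by
        have := (rowSpace X).smul_mem (c i0)⁻¹ hmem
        rw [← hcspec i0, smul_smul, inv_mul_cancel₀ hc0, one_smul] at this
        exact this
      exact hvrow this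
    have hclosed : IsClosed ((rowSpace X : Submodule ℝ (Fin n → ℝ)) : Set (Fin n → ℝ)) :=
      Submodule.closed_of_finiteDimensional _
    have hne : ((rowSpace X : Submodule ℝ (Fin n → ℝ)) : Set (Fin n → ℝ)).Nonempty :=
      ⟨0, Submodule.zero_mem _⟩
    set δ := Metric.infDist (Y i0) ((rowSpace X : Submodule ℝ (Fin n → ℝ)) : Set (Fin n → ℝ))
      with hδ
    have hδpos : 0 < δ := (hclosed.notMem_iff_infDist_pos hne).mp hYi0
    have hbound : ∀ (A : Matrix (Fin r) (Fin din) ℝ) (B : Matrix (Fin dout) (Fin r) ℝ),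
        δ ≤ frobNorm (Y - B * A * X) := by
      intro A B
      set M := B * A * X with hM
      have hMrow : M i0 ∈ rowSpace X := by
        have : M i0 = ∑ k : Fin din, (B * A) i0 k • X k := by
          funext j
          simp only [hM, Matrix.mul_apply, Finset.sum_apply, Pi.smul_apply, smul_eq_mul,
            Finset.mul_sum, Finset.sum_mul]
        rw [this]
        exact Submodule.sum_mem _ fun k _ =>
          Submodule.smul_mem _ _ (Submodule.subset_span ⟨k, rfl⟩)
      have h1 : δ ≤ dist (Y i0) (M i0) := Metric.infDist_le_dist_of_mem hMrow
      have h2 : dist (Y i0) (M i0) ≤ frobNorm (Y - M) := by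
        rw [dist_eq_norm]
        unfold frobNorm
        rw [pi_norm_le_iff_of_nonneg (Real.sqrt_nonneg _)]
        intro j
        have habs : ‖Y i0 j - M i0 j‖ = Real.sqrt ((Y i0 j - M i0 j) ^ 2) := by
          rw [Real.sqrt_sq_eq_abs]; rfl
        have hterm : (Y i0 j - M i0 j) ^ 2 ≤ ∑ i, ∑ jj, ((Y - M) i jj) ^ 2 := by
          have hj : (Y i0 j - M i0 j) ^ 2 ≤ ∑ jj, ((Y - M) i0 jj) ^ 2 := by
            have := Finset.single_le_sum
              (f := fun jj => ((Y - M) i0 jj) ^ 2)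
              (fun jj _ => sq_nonneg _) (Finset.mem_univ j)
            simpa [Matrix.sub_apply] using this
          refine le_trans hj ?_
          exact Finset.single_le_sum
            (f := fun i => ∑ jj, ((Y - M) i jj) ^ 2)
            (fun i _ => Finset.sum_nonneg fun _ _ => sq_nonneg _) (Finset.mem_univ i0)
        calc ‖(Y i0 - M i0) j‖ = Real.sqrt ((Y i0 j - M i0 j) ^ 2) := habs
          _ ≤ _ := Real.sqrt_le_sqrt hterm
      exact le_trans h1 h2
    have : δ ≤ Eid X Y r := by
      refine le_ciInf fun A => le_ciInf fun B => hbound A B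
    linarith

end

end CoLA
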